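/- With r_e(x) = -tanh(πx) - i/cosh(πx) and r_o(x) = -tanh(πx) + i/cosh(πx), the integrals (1/(2πi)) ∫_{-∞}^{∞} conj(r_e(x)) · r_e'(x) dx = -1/2 and (1/(2πi)) ∫_{-∞}^{∞} conj(r_o(x)) · r_o'(x) dx = 1/2. -/

import Mathlib

open Complex

/-- `r_e(x) = -tanh(πx) - i/cosh(πx)`. -/
noncomputable def rEven (x : ℝ) : ℂ :=
  -(Real.tanh (Real.pi * x) : ℂ) - Complex.I / (Real.cosh (Real.pi * x) : ℂ)

/-- `r_o(x) = -tanh(πx) + i/cosh(πx)`. -/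
noncomputable def rOdd (x : ℝ) : ℂ :=
  -(Real.tanh (Real.pi * x) : ℂ) + Complex.I / (Real.cosh (Real.pi * x) : ℂ)

open MeasureTheory Filter

lemma cosh_pi_pos (x : ℝ) : 0 < Real.cosh (Real.pi * x) := Real.cosh_pos _
lemma cosh_pi_ne (x : ℝ) : Real.cosh (Real.pi * x) ≠ 0 := (cosh_pi_pos x).ne'

lemma sech_integrableOn_Ioi : IntegrableOn (fun x : ℝ => (Real.cosh (Real.pi * x))⁻¹) (Set.Ioi 0) := by
  have hg : IntegrableOn (fun x : ℝ => 2 * Real.exp (-Real.pi * x)) (Set.Ioi 0) :=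
    (exp_neg_integrableOn_Ioi 0 Real.pi_pos).const_mul 2
  have hcont : Continuous fun x : ℝ => (Real.cosh (Real.pi * x))⁻¹ :=
    (Real.continuous_cosh.comp (continuous_const.mul continuous_id)).inv₀ cosh_pi_ne
  refine hg.integrable.mono' hcont.aestronglyMeasurable.restrict (ae_of_all _ fun x => ?_)
  rw [Real.norm_eq_abs, abs_of_pos (inv_pos.mpr (cosh_pi_pos x))]
  have h1 : Real.exp (Real.pi * x) / 2 ≤ Real.cosh (Real.pi * x) := by
    rw [Real.cosh_eq]
    have := (Real.exp_pos (-(Real.pi * x))).le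
    linarith
  have h2 : 0 < Real.exp (Real.pi * x) / 2 := by positivity
  calc (Real.cosh (Real.pi * x))⁻¹ ≤ (Real.exp (Real.pi * x) / 2)⁻¹ := inv_anti₀ h2 h1
    _ = 2 * Real.exp (-Real.pi * x) := by
        rw [neg_mul, Real.exp_neg]; field_simp

lemma sech_integrable : Integrable fun x : ℝ => (Real.cosh (Real.pi * x))⁻¹ := by
  set f : ℝ → ℝ := fun x => (Real.cosh (Real.pi * x))⁻¹ with hf
  have hIoi : IntegrableOn f (Set.Ioi 0) := sech_integrableOn_Ioi
  have hind : Integrable ((Set.Ioi (0:ℝ)).indicator f) := by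
    rwa [integrable_indicator_iff measurableSet_Ioi]
  have hneg : Integrable fun x => ((Set.Ioi (0:ℝ)).indicator f) (-x) := hind.comp_neg
  have heq : (fun x => ((Set.Ioi (0:ℝ)).indicator f) (-x)) = (Set.Iio (0:ℝ)).indicator f := by
    funext x
    by_cases hx : x < 0
    · rw [Set.indicator_of_mem (by simpa using hx : -x ∈ Set.Ioi (0:ℝ)),
        Set.indicator_of_mem (by simpa using hx)]
      simp [hf, mul_neg]
    · rw [Set.indicator_of_notMem (by simpa using hx), Set.indicator_of_notMem (by simpa using hx)]
  have hIio : IntegrableOn f (Set.Iio 0) := by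
    rw [← integrable_indicator_iff measurableSet_Iio, ← heq]; exact hneg
  have hIci : IntegrableOn f (Set.Ici 0) := by
    rw [integrableOn_Ici_iff_integrableOn_Ioi]; exact hIoi
  have : IntegrableOn f (Set.Iio 0 ∪ Set.Ici 0) := hIio.union hIci
  rwa [Set.Iio_union_Ici, integrableOn_univ] at this

lemma sinh_pi_hasDeriv (x : ℝ) :
    HasDerivAt (fun x : ℝ => Real.sinh (Real.pi * x)) (Real.pi * Real.cosh (Real.pi * x)) x := by
  have h := (Real.hasDerivAt_sinh (Real.pi * x)).comp x ((hasDerivAt_id x).const_mul Real.pi)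
  simpa [Function.comp_def, mul_comm] using h

lemma cosh_pi_hasDeriv (x : ℝ) :
    HasDerivAt (fun x : ℝ => Real.cosh (Real.pi * x)) (Real.pi * Real.sinh (Real.pi * x)) x := by
  have h := (Real.hasDerivAt_cosh (Real.pi * x)).comp x ((hasDerivAt_id x).const_mul Real.pi)
  simpa [Function.comp_def, mul_comm] using h

lemma antideriv_hasDeriv (x : ℝ) :
    HasDerivAt (fun x : ℝ => Real.pi⁻¹ * Real.arctan (Real.sinh (Real.pi * x)))
      ((Real.cosh (Real.pi * x))⁻¹) x := by
  have h := ((Real.hasDerivAt_arctan (Real.sinh (Real.pi * x))).comp x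
    (sinh_pi_hasDeriv x)).const_mul Real.pi⁻¹
  refine h.congr_deriv ?_
  have hc := cosh_pi_ne x
  have hsq : Real.cosh (Real.pi * x) ^ 2 = Real.sinh (Real.pi * x) ^ 2 + 1 := Real.cosh_sq _
  field_simp
  rw [add_comm, ← hsq]

lemma sech_integral : (∫ x : ℝ, (Real.cosh (Real.pi * x))⁻¹) = 1 := by
  have htop : Tendsto (fun x : ℝ => Real.pi⁻¹ * Real.arctan (Real.sinh (Real.pi * x))) atTop
      (nhds (Real.pi⁻¹ * (Real.pi / 2))) := by
    have hsinh : Tendsto (fun x : ℝ => Real.sinh (Real.pi * x)) atTop atTop := by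
      have : Tendsto (fun x : ℝ => Real.pi * x) atTop atTop :=
        Tendsto.const_mul_atTop Real.pi_pos tendsto_id
      have h1 : Tendsto Real.sinh atTop atTop := by
        have : Tendsto (fun y : ℝ => (Real.exp y - Real.exp (-y)) / 2) atTop atTop := by
          apply Tendsto.atTop_div_const (by norm_num)
          have h2 : Tendsto (fun y : ℝ => Real.exp y + -Real.exp (-y)) atTop atTop :=
            Real.tendsto_exp_atTop.atTop_add
              (Real.tendsto_exp_neg_atTop_nhds_zero.neg)
          simpa [sub_eq_add_neg] using h2
        have hfun : Real.sinh = fun y => (Real.exp y - Real.exp (-y)) / 2 := funext Real.sinh_eq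
        rw [hfun]; exact this
      exact h1.comp this
    exact ((Real.tendsto_arctan_atTop.mono_right nhdsWithin_le_nhds).comp hsinh).const_mul _
  have hbot : Tendsto (fun x : ℝ => Real.pi⁻¹ * Real.arctan (Real.sinh (Real.pi * x))) atBot
      (nhds (Real.pi⁻¹ * (-(Real.pi / 2)))) := by
    have hsinh : Tendsto (fun x : ℝ => Real.sinh (Real.pi * x)) atBot atBot := by
      have hmul : Tendsto (fun x : ℝ => Real.pi * x) atBot atBot :=
        Tendsto.const_mul_atBot Real.pi_pos tendsto_id
      have h1 : Tendsto Real.sinh atBot atBot := by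
        have : Tendsto (fun y : ℝ => (Real.exp y - Real.exp (-y)) / 2) atBot atBot := by
          apply Tendsto.atBot_div_const (by norm_num)
          have hexp : Tendsto (fun y : ℝ => Real.exp y) atBot (nhds 0) := Real.tendsto_exp_atBot
          have hneg : Tendsto (fun y : ℝ => -Real.exp (-y)) atBot atBot := by
            have : Tendsto (fun y : ℝ => Real.exp (-y)) atBot atTop :=
              Real.tendsto_exp_atTop.comp tendsto_neg_atBot_atTop
            exact tendsto_neg_atTop_atBot.comp this
          simpa [sub_eq_add_neg] using hexp.add_atBot hneg
        have hfun : Real.sinh = fun y => (Real.exp y - Real.exp (-y)) / 2 := funext Real.sinh_eq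
        rw [hfun]; exact this
      exact h1.comp hmul
    exact ((Real.tendsto_arctan_atBot.mono_right nhdsWithin_le_nhds).comp hsinh).const_mul _
  have := integral_of_hasDerivAt_of_tendsto antideriv_hasDeriv sech_integrable hbot htop
  rw [this]
  field_simp
  norm_num

lemma tanh_pi_hasDeriv (x : ℝ) :
    HasDerivAt (fun x : ℝ => Real.tanh (Real.pi * x))
      (Real.pi / Real.cosh (Real.pi * x) ^ 2) x := by
  have hfun : (fun x : ℝ => Real.tanh (Real.pi * x))
      = fun x : ℝ => Real.sinh (Real.pi * x) / Real.cosh (Real.pi * x) :=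
    funext fun x => Real.tanh_eq_sinh_div_cosh _
  rw [hfun]
  have h := (sinh_pi_hasDeriv x).div (cosh_pi_hasDeriv x) (cosh_pi_ne x)
  refine h.congr_deriv ?_
  have hsq : Real.cosh (Real.pi * x) ^ 2 = Real.sinh (Real.pi * x) ^ 2 + 1 := Real.cosh_sq _
  have hnum : Real.pi * Real.cosh (Real.pi * x) * Real.cosh (Real.pi * x)
      - Real.sinh (Real.pi * x) * (Real.pi * Real.sinh (Real.pi * x)) = Real.pi := by
    linear_combination Real.pi * hsq
  rw [hnum]

lemma sech_pi_hasDeriv (x : ℝ) :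
    HasDerivAt (fun x : ℝ => (Real.cosh (Real.pi * x))⁻¹)
      (-(Real.pi * Real.sinh (Real.pi * x)) / Real.cosh (Real.pi * x) ^ 2) x :=
  (cosh_pi_hasDeriv x).inv (cosh_pi_ne x)

lemma rEven_eq : rEven = fun x : ℝ =>
    (↑(-Real.tanh (Real.pi * x)) : ℂ) - Complex.I * (↑((Real.cosh (Real.pi * x))⁻¹) : ℂ) := by
  funext x
  simp [rEven, div_eq_mul_inv, Complex.ofReal_inv, Complex.ofReal_neg]

lemma rOdd_eq : rOdd = fun x : ℝ =>
    (↑(-Real.tanh (Real.pi * x)) : ℂ) + Complex.I * (↑((Real.cosh (Real.pi * x))⁻¹) : ℂ) := by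
  funext x
  simp [rOdd, div_eq_mul_inv, Complex.ofReal_inv, Complex.ofReal_neg]

lemma rEven_hasDeriv (x : ℝ) :
    HasDerivAt rEven
      ((↑(-(Real.pi / Real.cosh (Real.pi * x) ^ 2)) : ℂ)
        - Complex.I * (↑(-(Real.pi * Real.sinh (Real.pi * x)) / Real.cosh (Real.pi * x) ^ 2) : ℂ)) x := by
  rw [rEven_eq]
  exact (((tanh_pi_hasDeriv x).neg).ofReal_comp).sub
    (((sech_pi_hasDeriv x).ofReal_comp).const_mul Complex.I)

lemma rOdd_hasDeriv (x : ℝ) :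
    HasDerivAt rOdd
      ((↑(-(Real.pi / Real.cosh (Real.pi * x) ^ 2)) : ℂ)
        + Complex.I * (↑(-(Real.pi * Real.sinh (Real.pi * x)) / Real.cosh (Real.pi * x) ^ 2) : ℂ)) x := by
  rw [rOdd_eq]
  exact (((tanh_pi_hasDeriv x).neg).ofReal_comp).add
    (((sech_pi_hasDeriv x).ofReal_comp).const_mul Complex.I)

lemma even_integrand (x : ℝ) :
    (starRingEnd ℂ) (rEven x) * deriv rEven x
      = -(Complex.I * ↑Real.pi) * (↑((Real.cosh (Real.pi * x))⁻¹) : ℂ) := by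
  rw [(rEven_hasDeriv x).deriv, rEven_eq]
  have hc : ((Real.cosh (Real.pi * x) : ℝ) : ℂ) ≠ 0 := by
    exact_mod_cast cosh_pi_ne x
  have hsq : ((Real.cosh (Real.pi * x) : ℝ) : ℂ) ^ 2
      = ((Real.sinh (Real.pi * x) : ℝ) : ℂ) ^ 2 + 1 := by
    exact_mod_cast Real.cosh_sq (Real.pi * x)
  have htanh : ((Real.tanh (Real.pi * x) : ℝ) : ℂ)
      = ((Real.sinh (Real.pi * x) : ℝ) : ℂ) / ((Real.cosh (Real.pi * x) : ℝ) : ℂ) := by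
    exact_mod_cast Real.tanh_eq_sinh_div_cosh (Real.pi * x)
  simp only [map_sub, map_neg, map_mul, map_inv₀, Complex.conj_ofReal, Complex.conj_I,
    Complex.ofReal_neg, Complex.ofReal_div, Complex.ofReal_mul, Complex.ofReal_inv,
    Complex.ofReal_pow]
  rw [htanh]
  generalize hgc : ((Real.cosh (Real.pi * x) : ℝ) : ℂ) = c at hc hsq ⊢
  generalize hgs : ((Real.sinh (Real.pi * x) : ℝ) : ℂ) = s at hsq ⊢
  field_simp
  linear_combination s * Complex.I_sq + Complex.I * hsq

lemma odd_integrand (x : ℝ) :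
    (starRingEnd ℂ) (rOdd x) * deriv rOdd x
      = (Complex.I * ↑Real.pi) * (↑((Real.cosh (Real.pi * x))⁻¹) : ℂ) := by
  rw [(rOdd_hasDeriv x).deriv, rOdd_eq]
  have hc : ((Real.cosh (Real.pi * x) : ℝ) : ℂ) ≠ 0 := by
    exact_mod_cast cosh_pi_ne x
  have hsq : ((Real.cosh (Real.pi * x) : ℝ) : ℂ) ^ 2
      = ((Real.sinh (Real.pi * x) : ℝ) : ℂ) ^ 2 + 1 := by
    exact_mod_cast Real.cosh_sq (Real.pi * x)
  have htanh : ((Real.tanh (Real.pi * x) : ℝ) : ℂ)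
      = ((Real.sinh (Real.pi * x) : ℝ) : ℂ) / ((Real.cosh (Real.pi * x) : ℝ) : ℂ) := by
    exact_mod_cast Real.tanh_eq_sinh_div_cosh (Real.pi * x)
  simp only [map_add, map_neg, map_mul, map_inv₀, Complex.conj_ofReal, Complex.conj_I,
    Complex.ofReal_neg, Complex.ofReal_div, Complex.ofReal_mul, Complex.ofReal_inv,
    Complex.ofReal_pow]
  rw [htanh]
  generalize hgc : ((Real.cosh (Real.pi * x) : ℝ) : ℂ) = c at hc hsq ⊢
  generalize hgs : ((Real.sinh (Real.pi * x) : ℝ) : ℂ) = s at hsq ⊢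
  field_simp
  linear_combination s * Complex.I_sq - Complex.I * hsq

/-- The half-winding numbers
`(1/(2πi)) ∫ conj(r_e) r_e' = -1/2` and `(1/(2πi)) ∫ conj(r_o) r_o' = 1/2`. -/
theorem half_winding_numbers :
    (2 * Real.pi * Complex.I)⁻¹ *
        (∫ x : ℝ, (starRingEnd ℂ) (rEven x) * deriv rEven x) = -(1 / 2) ∧
    (2 * Real.pi * Complex.I)⁻¹ *
        (∫ x : ℝ, (starRingEnd ℂ) (rOdd x) * deriv rOdd x) = 1 / 2 := by
  have hπ : (Real.pi : ℂ) ≠ 0 := by exact_mod_cast Real.pi_ne_zero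
  have hint : (∫ x : ℝ, (↑((Real.cosh (Real.pi * x))⁻¹) : ℂ)) = 1 := by
    rw [← Complex.ofReal_one, ← sech_integral]
    exact integral_ofReal
  constructor
  · have : (∫ x : ℝ, (starRingEnd ℂ) (rEven x) * deriv rEven x)
        = ∫ x : ℝ, -(Complex.I * ↑Real.pi) * (↑((Real.cosh (Real.pi * x))⁻¹) : ℂ) := by
      exact MeasureTheory.integral_congr_ae (Filter.Eventually.of_forall even_integrand)
    rw [this, MeasureTheory.integral_const_mul, hint, mul_one]
    field_simp
  · have : (∫ x : ℝ, (starRingEnd ℂ) (rOdd x) * deriv rOdd x)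
        = ∫ x : ℝ, (Complex.I * ↑Real.pi) * (↑((Real.cosh (Real.pi * x))⁻¹) : ℂ) := by
      exact MeasureTheory.integral_congr_ae (Filter.Eventually.of_forall odd_integrand)
    rw [this, MeasureTheory.integral_const_mul, hint, mul_one]
    field_simp
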